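/- arXiv:1503.01175 — 2 statements merged into one kernel-verified Lean document; each statement's English description precedes it below -/
import Mathlib

section
/- For all a > 0 and x > 0, the integral over t in (0, ∞) of cos(a t) / (x² + t²) dt equals (π / (2x)) · e^{-a x}. -/
open Real MeasureTheory

open Set Filter Complex
open scoped Topology

lemma cexp_int {c : ℂ} (hc : c.re < 0) :
    ∫ t in Set.Ioi (0:ℝ), Complex.exp (c * t) = -c⁻¹ := by
  have hc0 : c ≠ 0 := fun h => by simp [h] at hc
  have hint : IntegrableOn (fun t : ℝ => Complex.exp (c * t)) (Ioi 0) := by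
    apply Integrable.mono' ((exp_neg_integrableOn_Ioi 0 (by linarith : 0 < -c.re)).congr_fun
      (fun t _ => by rw [neg_neg]) measurableSet_Ioi)
    · exact (Complex.continuous_exp.comp (continuous_const.mul Complex.continuous_ofReal)).aestronglyMeasurable
    · filter_upwards with t
      rw [Complex.norm_exp]
      simp [mul_comm]
  have := integral_Ioi_of_hasDerivAt_of_tendsto' (a := 0) (f := fun t : ℝ => Complex.exp (c * t) / c)
    (f' := fun t : ℝ => Complex.exp (c * t)) (m := 0) ?_ hint ?_
  · simpa using this
  · intro t _
    have : HasDerivAt (fun t : ℝ => Complex.exp (c * t)) (c * Complex.exp (c * t)) t := by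
      have h1 : HasDerivAt (fun t : ℝ => (c * t : ℂ)) c t := by
        simpa using (Complex.ofRealCLM.hasDerivAt (x := t)).const_mul c
      simpa [mul_comm] using h1.cexp
    simpa [mul_div_assoc, mul_div_cancel_left₀ _ hc0] using this.div_const c
  · rw [show (0:ℂ) = 0 / c by simp]
    apply Tendsto.div_const
    rw [tendsto_zero_iff_norm_tendsto_zero]
    have : ∀ t : ℝ, ‖Complex.exp (c * t)‖ = Real.exp (c.re * t) := by
      intro t; rw [Complex.norm_exp]; simp [mul_comm]
    simp only [this]
    exact Real.tendsto_exp_atBot.comp (tendsto_id.const_mul_atTop_of_neg hc)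

lemma integrable_exp_neg_abs {x : ℝ} (hx : 0 < x) :
    Integrable (fun v : ℝ => rexp (-(x * |v|))) := by
  have hIoi : IntegrableOn (fun v : ℝ => rexp (-(x * |v|))) (Ioi 0) := by
    refine ((exp_neg_integrableOn_Ioi 0 hx).congr_fun (fun v hv => ?_) measurableSet_Ioi)
    rw [abs_of_pos hv]; simp only [neg_mul]
  have hIci : IntegrableOn (fun v : ℝ => rexp (-(x * v))) (Ici 0) := by
    rw [integrableOn_Ici_iff_integrableOn_Ioi]
    exact (exp_neg_integrableOn_Ioi 0 hx).congr_fun (fun v hv => congrArg rexp (neg_mul x v)) measurableSet_Ioi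
  have hIic : IntegrableOn (fun v : ℝ => rexp (-(x * |v|))) (Iic 0) := by
    rw [← integrable_indicator_iff measurableSet_Ici] at hIci
    have h2 := hIci.comp_neg
    rw [← integrable_indicator_iff measurableSet_Iic]
    refine h2.congr (Filter.Eventually.of_forall fun v => ?_)
    show (Ici (0:ℝ)).indicator (fun v => rexp (-(x * v))) (-v) = _
    by_cases hv : v ≤ 0
    · rw [Set.indicator_of_mem (show -v ∈ Ici (0:ℝ) by simpa using hv),
        Set.indicator_of_mem (Set.mem_Iic.mpr hv), abs_of_nonpos hv]
    · rw [Set.indicator_of_notMem (by simpa using hv),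
        Set.indicator_of_notMem (by simpa using hv)]
  have := hIic.union hIoi
  rwa [Iic_union_Ioi, integrableOn_univ] at this

lemma fourier_exp {x : ℝ} (hx : 0 < x) (w : ℝ) :
    FourierTransform.fourier (fun t : ℝ => (rexp (-(x * |t|)) : ℂ)) w
      = (((2*x) / (x^2 + (2*π*w)^2) : ℝ) : ℂ) := by
  rw [Real.fourier_real_eq_integral_exp_smul]
  have hcont : Continuous fun v : ℝ =>
      Complex.exp (↑(-2 * π * v * w) * Complex.I) * (rexp (-(x * |v|)) : ℂ) := by
    fun_prop
  have hint : Integrable fun v : ℝ =>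
      Complex.exp (↑(-2 * π * v * w) * Complex.I) * (rexp (-(x * |v|)) : ℂ) := by
    refine ((integrable_exp_neg_abs hx).mono' hcont.aestronglyMeasurable ?_)
    filter_upwards with v
    rw [norm_mul, Complex.norm_exp]
    simp [Complex.norm_exp]
  simp only [smul_eq_mul]
  rw [← intervalIntegral.integral_Iic_add_Ioi (b := (0:ℝ)) hint.integrableOn hint.integrableOn]
  have hIoi : ∫ v in Ioi (0:ℝ),
      Complex.exp (↑(-2 * π * v * w) * Complex.I) * (rexp (-(x * |v|)) : ℂ)
      = -((-x : ℂ) - (2*π*w) * Complex.I)⁻¹ := by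
    rw [← cexp_int (c := (-x : ℂ) - (2*π*w) * Complex.I) (by simp [hx])]
    refine setIntegral_congr_fun measurableSet_Ioi (fun v hv => ?_)
    rw [abs_of_pos hv, Complex.ofReal_exp, ← Complex.exp_add]
    congr 1
    push_cast
    ring
  have hIic : ∫ v in Iic (0:ℝ),
      Complex.exp (↑(-2 * π * v * w) * Complex.I) * (rexp (-(x * |v|)) : ℂ)
      = -((-x : ℂ) + (2*π*w) * Complex.I)⁻¹ := by
    rw [← cexp_int (c := (-x : ℂ) + (2*π*w) * Complex.I) (by simp [hx])]
    have hneg := integral_comp_neg_Ioi (0:ℝ)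
      (fun v => Complex.exp (↑(-2 * π * v * w) * Complex.I) * (rexp (-(x * |v|)) : ℂ))
    rw [neg_zero] at hneg
    rw [← hneg]
    refine setIntegral_congr_fun measurableSet_Ioi (fun v hv => ?_)

    rw [abs_of_neg (by simpa using hv : -v < 0), Complex.ofReal_exp, ← Complex.exp_add]
    congr 1
    push_cast
    ring
  rw [hIic, hIoi]
  have hne1 : ((-x : ℂ) + (2*π*w) * Complex.I) ≠ 0 := by
    intro h
    have := congrArg Complex.re h
    simp at this
    linarith
  have hne2 : ((-x : ℂ) - (2*π*w) * Complex.I) ≠ 0 := by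
    intro h
    have := congrArg Complex.re h
    simp at this
    linarith
  have hr : (x^2 + (2*π*w)^2 : ℝ) ≠ 0 := by positivity
  have hne3 : ((x:ℂ)^2 + ((2*π*w):ℂ)^2) ≠ 0 := by exact_mod_cast hr
  have h1 : ((x:ℂ) - (2*π*w) * Complex.I) ≠ 0 := by
    intro h; apply hne1; rw [← neg_eq_zero] at h; rw [← h]; ring
  have h2 : ((x:ℂ) + (2*π*w) * Complex.I) ≠ 0 := by
    intro h; apply hne2; rw [← neg_eq_zero] at h; rw [← h]; ring
  have e1 : -((-x : ℂ) + (2*π*w) * Complex.I)⁻¹ = ((x:ℂ) - (2*π*w) * Complex.I)⁻¹ := by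
    rw [← inv_neg]; ring_nf
  have e2 : -((-x : ℂ) - (2*π*w) * Complex.I)⁻¹ = ((x:ℂ) + (2*π*w) * Complex.I)⁻¹ := by
    rw [← inv_neg]; ring_nf
  rw [e1, e2, inv_add_inv h1 h2]
  push_cast
  rw [div_eq_div_iff (mul_ne_zero h1 h2) hne3]
  linear_combination (2*(x:ℂ)*(2*(π:ℂ)*(w:ℂ))^2) * Complex.I_sq

lemma integrable_inv_sq_add {x : ℝ} (hx : 0 < x) :
    Integrable (fun t : ℝ => (x^2 + t^2)⁻¹) := by
  have base : Integrable (fun u : ℝ => (1 + u^2)⁻¹) := integrable_inv_one_add_sq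
  have b2 : Integrable (fun u : ℝ => (1 + (x⁻¹ * u)^2)⁻¹) :=
    (MeasureTheory.integrable_comp_mul_left_iff _ (inv_ne_zero hx.ne')).mpr base
  have := b2.const_mul (x^2)⁻¹
  refine this.congr (Filter.Eventually.of_forall fun t => ?_)
  field_simp

theorem cos_integral (a x : ℝ) (ha : 0 < a) (hx : 0 < x) :
    ∫ t in Set.Ioi (0:ℝ), Real.cos (a * t) / (x ^ 2 + t ^ 2)
      = (Real.pi / (2 * x)) * Real.exp (-a * x) := by
  set f : ℝ → ℂ := fun t => (rexp (-(x * |t|)) : ℂ) with hf_def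
  have hf_int : Integrable f := (integrable_exp_neg_abs hx).ofReal
  have hf_cont : Continuous f := by fun_prop
  have h𝓕 : FourierTransform.fourier f = fun w : ℝ => (((2*x) / (x^2 + (2*π*w)^2) : ℝ) : ℂ) :=
    funext fun w => fourier_exp hx w
  have h𝓕int : Integrable (FourierTransform.fourier f) := by
    rw [h𝓕]
    apply Integrable.ofReal
    have b2 : Integrable (fun w : ℝ => (x^2 + (2*π*w)^2)⁻¹) := by
      have := (MeasureTheory.integrable_comp_mul_left_iff
        (fun t : ℝ => (x^2 + t^2)⁻¹) (R := 2*π) (by positivity)).mpr (integrable_inv_sq_add hx)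
      exact this
    refine (b2.const_mul (2*x)).congr (Filter.Eventually.of_forall fun w => ?_)
    show (2*x) * (x ^ 2 + (2 * π * w) ^ 2)⁻¹ = 2 * x / (x ^ 2 + (2 * π * w) ^ 2)
    rw [div_eq_mul_inv]
  -- Fourier inversion at the point a
  have hinv := hf_int.fourierInv_fourier_eq h𝓕int (hf_cont.continuousAt (x := a))
  rw [Real.fourierInv_eq_fourier_neg,
    Real.fourier_real_eq_integral_exp_smul, h𝓕] at hinv
  -- substitution t = 2 π w
  set G : ℝ → ℂ := fun u => Complex.exp ((a * u : ℝ) * Complex.I)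
      * (((2*x) / (x^2 + u^2) : ℝ) : ℂ) with hG_def
  have hsub : (∫ w : ℝ, Complex.exp (((-2 * π * w * -a : ℝ)) * Complex.I)
      • ((((2*x) / (x^2 + (2*π*w)^2) : ℝ)) : ℂ)) = ∫ w : ℝ, G (2*π*w) := by
    congr 1
    funext w
    simp only [hG_def, smul_eq_mul]
    rw [show (-2*π*w*-a : ℝ) = a*(2*π*w) by ring]
  have h2π : (0:ℝ) < 2*π := by positivity
  have hGint : (∫ w : ℝ, G (2*π*w)) = |(2*π)⁻¹| • ∫ u : ℝ, G u :=
    MeasureTheory.Measure.integral_comp_mul_left G (2*π)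
  rw [hsub, hGint] at hinv
  have hGval : (∫ u : ℝ, G u) = (2*π) • (rexp (-(x * |a|)) : ℂ) := by
    rw [abs_of_pos (inv_pos.mpr h2π)] at hinv
    calc (∫ u : ℝ, G u) = (2*π) • ((2*π)⁻¹ • ∫ u : ℝ, G u) := by
          rw [smul_smul, mul_inv_cancel₀ h2π.ne', one_smul]
    _ = (2*π) • (f a) := by rw [hinv]
    _ = (2*π) • (rexp (-(x * |a|)) : ℂ) := rfl
  -- now take real parts and divide
  have hGint2 : Integrable G := by
    have hcontG : Continuous G := by
      apply Continuous.mul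
      · fun_prop
      · exact Complex.continuous_ofReal.comp
          (continuous_const.div (by fun_prop) (fun u => ne_of_gt (by positivity)))
    refine Integrable.mono' (g := fun u : ℝ => 2*x * (x^2+u^2)⁻¹)
      ((integrable_inv_sq_add hx).const_mul (2*x)) hcontG.aestronglyMeasurable ?_
    · filter_upwards with u
      have hGu : G u = Complex.exp ((a*u : ℝ) * Complex.I) * (((2*x)/(x^2+u^2) : ℝ) : ℂ) := rfl
      rw [hGu, norm_mul, Complex.norm_exp]
      have hre0 : ((a*u : ℝ) * Complex.I).re = 0 := by simp
      rw [hre0, Real.exp_zero, one_mul, Complex.norm_real, Real.norm_eq_abs, abs_div,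
        abs_of_pos (by positivity : (0:ℝ) < 2*x), abs_of_pos (by positivity : (0:ℝ) < x^2+u^2),
        div_eq_mul_inv]
  have hre := Complex.reCLM.integral_comp_comm hGint2
  rw [hGval] at hre
  have hre_eq : ∀ u : ℝ, Complex.reCLM (G u) = Real.cos (a * u) * ((2*x) / (x^2 + u^2)) := by
    intro u
    have hGu : G u = Complex.exp ((a*u : ℝ) * Complex.I) * (((2*x)/(x^2+u^2) : ℝ) : ℂ) := rfl
    rw [Complex.reCLM_apply, hGu, Complex.mul_re, Complex.ofReal_re, Complex.ofReal_im, mul_zero,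
      sub_zero, Complex.exp_ofReal_mul_I_re]
  simp only [hre_eq] at hre
  -- hre : ∫ u, cos(a u) * (2x/(x²+u²)) = re ((2π) • exp(-(x|a|)))
  have hre2 : (∫ u : ℝ, Real.cos (a * u) * ((2*x) / (x^2 + u^2)))
      = 2*π * rexp (-(x * |a|)) := by
    rw [hre, Complex.reCLM_apply, Complex.real_smul, ← Complex.ofReal_mul, Complex.ofReal_re]
  -- convert to the function cos(at)/(x²+t²)
  have key : (∫ u : ℝ, Real.cos (a * u) / (x^2 + u^2)) = (π / x) * rexp (-(x * a)) := by
    have hconst : (∫ u : ℝ, Real.cos (a * u) * ((2*x) / (x^2 + u^2)))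
        = (2*x) * ∫ u : ℝ, Real.cos (a * u) / (x^2 + u^2) := by
      rw [← MeasureTheory.integral_const_mul]
      congr 1; funext u; ring
    rw [hconst] at hre2
    rw [abs_of_pos ha] at hre2
    have : (∫ u : ℝ, Real.cos (a * u) / (x^2 + u^2)) = (2*π * rexp (-(x * a))) / (2*x) := by
      field_simp at hre2 ⊢
      linarith [hre2]
    rw [this]
    field_simp
  -- evenness
  have hint_cos : Integrable (fun u : ℝ => Real.cos (a * u) / (x^2 + u^2)) := by
    refine Integrable.mono' (integrable_inv_sq_add hx) ?_ ?_
    · exact ((Real.continuous_cos.comp (continuous_const.mul continuous_id)).div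
        (by fun_prop) (fun u => ne_of_gt (by positivity))).aestronglyMeasurable
    · filter_upwards with u
      rw [norm_div, Real.norm_eq_abs, Real.norm_eq_abs,
        abs_of_pos (by positivity : (0:ℝ) < x^2+u^2), div_eq_mul_inv]
      have h1 : |Real.cos (a*u)| ≤ 1 := Real.abs_cos_le_one _
      have h2 : (0:ℝ) < (x^2+u^2)⁻¹ := by positivity
      nlinarith
  have hsplit : (∫ u : ℝ, Real.cos (a * u) / (x^2 + u^2))
      = (∫ u in Iic (0:ℝ), Real.cos (a * u) / (x^2 + u^2))
        + ∫ u in Ioi (0:ℝ), Real.cos (a * u) / (x^2 + u^2) :=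
    (intervalIntegral.integral_Iic_add_Ioi hint_cos.integrableOn hint_cos.integrableOn).symm
  have heven : (∫ u in Iic (0:ℝ), Real.cos (a * u) / (x^2 + u^2))
      = ∫ u in Ioi (0:ℝ), Real.cos (a * u) / (x^2 + u^2) := by
    have hneg := integral_comp_neg_Ioi (0:ℝ) (fun u : ℝ => Real.cos (a * u) / (x^2 + u^2))
    rw [neg_zero] at hneg
    rw [← hneg]
    refine setIntegral_congr_fun measurableSet_Ioi (fun u hu => ?_)
    simp [mul_neg, Real.cos_neg, neg_sq]
  rw [hsplit, heven, ← two_mul] at key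
  have : (∫ u in Ioi (0:ℝ), Real.cos (a * u) / (x^2 + u^2))
      = (π / x) * rexp (-(x * a)) / 2 := by linarith
  rw [this]
  rw [show -a * x = -(x*a) by ring]
  ring
end

section
/- For all x > 0 and reals a, b with 0 < a ≤ b, the integral over t in (0, ∞) of cos(b t)·cos(a t) / (x² + t²) dt equals (π / (2x)) · e^{-b x} · cosh(a x). -/
open Real MeasureTheory

section CosCosAux
open Set Filter Topology FourierTransform Complex

lemma integral_cexp_neg_Ioi {z : ℂ} (hz : 0 < z.re) :
    ∫ t in Set.Ioi (0:ℝ), Complex.exp (-(z * t)) = 1 / z := by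
  have hz0 : z ≠ 0 := fun h => by simp [h] at hz
  have hderiv : ∀ t : ℝ, HasDerivAt (fun t : ℝ => -Complex.exp (-(z * t)) / z)
      (Complex.exp (-(z * t))) t := by
    intro t
    have h1 : HasDerivAt (fun t : ℝ => -(z * (t:ℂ))) (-z) t := by
      have h := ((Complex.ofRealCLM.hasDerivAt (x := t)).const_mul z).neg
      simp at h
      exact h
    have h2 := (Complex.hasDerivAt_exp (-(z * (t:ℂ)))).comp t h1
    have h3 := (h2.neg).div_const z
    exact h3.congr_deriv (by rw [mul_neg, neg_neg, mul_div_assoc, div_self hz0, mul_one])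
  have hint : IntegrableOn (fun t : ℝ => Complex.exp (-(z * t))) (Ioi 0) := by
    apply Integrable.mono' (exp_neg_integrableOn_Ioi 0 hz)
    · exact (Complex.continuous_exp.comp (by continuity)).aestronglyMeasurable
    · filter_upwards with t
      simp [Complex.norm_exp]
  have htend : Tendsto (fun t : ℝ => -Complex.exp (-(z * t)) / z) atTop (𝓝 0) := by
    rw [tendsto_zero_iff_norm_tendsto_zero]
    have : (fun t : ℝ => ‖-Complex.exp (-(z * t)) / z‖)
        = fun t : ℝ => Real.exp (-(z.re * t)) / ‖z‖ := by
      ext t; simp [Complex.norm_exp]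
    rw [this]
    have h4 : Tendsto (fun t : ℝ => -(z.re * t)) atTop atBot := by
      apply tendsto_neg_atBot_iff.mpr
      exact Tendsto.const_mul_atTop hz tendsto_id
    simpa using (Real.tendsto_exp_atBot.comp h4).div_const ‖z‖
  have := integral_Ioi_of_hasDerivAt_of_tendsto' (fun t _ => hderiv t) hint htend
  rw [this]
  simp [neg_div]


lemma exp_abs_integrable {x : ℝ} (hx : 0 < x) :
    Integrable (fun t : ℝ => Real.exp (-x * |t|)) := by
  have hIci : IntegrableOn (fun t : ℝ => Real.exp (-x * |t|)) (Ici 0) := by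
    rw [integrableOn_Ici_iff_integrableOn_Ioi]
    exact (exp_neg_integrableOn_Ioi 0 hx).congr_fun
      (fun t ht => by rw [abs_of_pos ht]) measurableSet_Ioi
  have hIic : IntegrableOn (fun t : ℝ => Real.exp (-x * |t|)) (Iic 0) := by
    have A : MeasurableEmbedding fun t : ℝ => -t :=
      (Homeomorph.neg ℝ).measurableEmbedding
    rw [← Measure.map_neg_eq_self (volume : Measure ℝ), A.integrableOn_map_iff]
    simpa [Function.comp_def] using hIci
  rw [← integrableOn_univ, ← Iic_union_Ioi (a := (0:ℝ))]
  exact hIic.union (hIci.mono_set Ioi_subset_Ici_self)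

lemma exp_abs_integrableC {x : ℝ} (hx : 0 < x) :
    Integrable (fun t : ℝ => (Real.exp (-x * |t|) : ℂ)) :=
  (exp_abs_integrable hx).ofReal

lemma fourier_exp_abs {x : ℝ} (hx : 0 < x) (ξ : ℝ) :
    𝓕 (fun t : ℝ => (Real.exp (-x * |t|) : ℂ)) ξ
      = ((2*x/(x^2+(2*π*ξ)^2) : ℝ) : ℂ) := by
  rw [Real.fourier_real_eq_integral_exp_smul]
  have h1 : IntegrableOn (fun v : ℝ => Complex.exp (↑(-2 * π * v * ξ) * Complex.I)
      • (Real.exp (-x * |v|) : ℂ)) (Iic 0) := by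
    apply Integrable.mono' ((exp_abs_integrableC hx).norm.integrableOn)
    · apply Continuous.aestronglyMeasurable; fun_prop
    · filter_upwards with t
      simp [Complex.norm_exp, map_mul]
  have h2 : IntegrableOn (fun v : ℝ => Complex.exp (↑(-2 * π * v * ξ) * Complex.I)
      • (Real.exp (-x * |v|) : ℂ)) (Ioi 0) := by
    apply Integrable.mono' ((exp_abs_integrableC hx).norm.integrableOn)
    · apply Continuous.aestronglyMeasurable; fun_prop
    · filter_upwards with t
      simp [Complex.norm_exp, map_mul]
  rw [← intervalIntegral.integral_Iic_add_Ioi h1 h2]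
  have e2 : ∫ v in Ioi (0:ℝ), Complex.exp (↑(-2 * π * v * ξ) * Complex.I)
      • (Real.exp (-x * |v|) : ℂ) = 1 / (x + 2*π*ξ*Complex.I) := by
    rw [← integral_cexp_neg_Ioi (z := x + 2*π*ξ*Complex.I) (by simpa using hx)]
    apply setIntegral_congr_fun measurableSet_Ioi
    intro v hv
    simp only
    rw [abs_of_pos hv, smul_eq_mul, Complex.ofReal_exp, ← Complex.exp_add]
    congr 1
    push_cast
    ring
  have e1 : ∫ v in Iic (0:ℝ), Complex.exp (↑(-2 * π * v * ξ) * Complex.I)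
      • (Real.exp (-x * |v|) : ℂ) = 1 / (x - 2*π*ξ*Complex.I) := by
    calc ∫ v in Iic (0:ℝ), Complex.exp (↑(-2 * π * v * ξ) * Complex.I)
          • (Real.exp (-x * |v|) : ℂ)
        = ∫ v in Iic (0:ℝ), (fun w : ℝ => Complex.exp (↑(2 * π * w * ξ) * Complex.I)
          • (Real.exp (-x * |w|) : ℂ)) (-v) := by
          apply setIntegral_congr_fun measurableSet_Iic
          intro v hv
          simp only [abs_neg]
          norm_num
      _ = ∫ v in Ioi (0:ℝ), Complex.exp (↑(2 * π * v * ξ) * Complex.I)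
          • (Real.exp (-x * |v|) : ℂ) := by
          simpa using integral_comp_neg_Iic (0:ℝ)
            (fun w : ℝ => Complex.exp (↑(2 * π * w * ξ) * Complex.I)
              • (Real.exp (-x * |w|) : ℂ))
      _ = 1 / (x - 2*π*ξ*Complex.I) := by
          rw [← integral_cexp_neg_Ioi (z := x - 2*π*ξ*Complex.I) (by simpa using hx)]
          apply setIntegral_congr_fun measurableSet_Ioi
          intro v hv
          simp only
          rw [abs_of_pos hv, smul_eq_mul, Complex.ofReal_exp, ← Complex.exp_add]
          congr 1
          push_cast
          ring
  rw [e1, e2]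
  have hd1 : ((x:ℂ) - 2*π*ξ*Complex.I) ≠ 0 := by
    intro h
    have := congrArg Complex.re h
    simp at this; linarith
  have hd2 : ((x:ℂ) + 2*π*ξ*Complex.I) ≠ 0 := by
    intro h
    have := congrArg Complex.re h
    simp at this; linarith
  have num : ((x:ℂ) + 2*π*ξ*Complex.I) + ((x:ℂ) - 2*π*ξ*Complex.I) = ((2*x:ℝ):ℂ) := by
    push_cast; ring
  have den : ((x:ℂ) - 2*π*ξ*Complex.I) * ((x:ℂ) + 2*π*ξ*Complex.I)
      = (((x^2+(2*π*ξ)^2:ℝ)):ℂ) := by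
    have : (Complex.I : ℂ)^2 = -1 := Complex.I_sq
    push_cast
    ring_nf
    rw [Complex.I_sq]
    ring
  rw [div_add_div _ _ hd1 hd2]
  simp only [one_mul, mul_one]
  rw [num, den, ← Complex.ofReal_div]

lemma G_integrable {x : ℝ} (hx : 0 < x) :
    Integrable (fun ξ : ℝ => 2*x/(x^2+(2*π*ξ)^2)) := by
  have hm : (0:ℝ) < min (x^2) (4*π^2) := by
    have := Real.pi_pos; positivity
  apply Integrable.mono' (integrable_inv_one_add_sq.const_mul (2*x/min (x^2) (4*π^2)))
  · apply Continuous.aestronglyMeasurable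
    apply Continuous.div continuous_const (by continuity)
    intro ξ; positivity
  · filter_upwards with ξ
    have h1 : (0:ℝ) < x^2 + (2*π*ξ)^2 := by positivity
    have key : (x^2+(2*π*ξ)^2)⁻¹ ≤ (min (x^2) (4*π^2))⁻¹ * (1+ξ^2)⁻¹ := by
      rw [← mul_inv]
      apply inv_anti₀ (by positivity)
      have hm1 : min (x^2) (4*π^2) ≤ x^2 := min_le_left _ _
      have hm2 : min (x^2) (4*π^2) ≤ 4*π^2 := min_le_right _ _
      nlinarith [sq_nonneg ξ, mul_le_mul_of_nonneg_right hm2 (sq_nonneg ξ)]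
    calc ‖2*x/(x^2+(2*π*ξ)^2)‖ = (2*x) * (x^2+(2*π*ξ)^2)⁻¹ := by
          rw [Real.norm_of_nonneg (by positivity)]; ring
      _ ≤ (2*x) * ((min (x^2) (4*π^2))⁻¹ * (1+ξ^2)⁻¹) :=
          mul_le_mul_of_nonneg_left key (by positivity)
      _ = 2*x/(min (x^2) (4*π^2)) * (1+ξ^2)⁻¹ := by ring

lemma integrable_kernel {x : ℝ} (hx : 0 < x) (c : ℝ) :
    Integrable (fun t : ℝ => Real.cos (c*t)/(x^2+t^2)) := by
  have hm : (0:ℝ) < min (x^2) 1 := by positivity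
  apply Integrable.mono' (integrable_inv_one_add_sq.const_mul (min (x^2) 1)⁻¹)
  · apply Continuous.aestronglyMeasurable
    apply Continuous.div (by continuity) (by continuity)
    intro t; positivity
  · filter_upwards with t
    have h1 : (0:ℝ) < x^2 + t^2 := by positivity
    have key : (x^2+t^2)⁻¹ ≤ (min (x^2) 1)⁻¹ * (1+t^2)⁻¹ := by
      rw [← mul_inv]
      apply inv_anti₀ (by positivity)
      have hm1 : min (x^2) 1 ≤ x^2 := min_le_left _ _
      have hm2 : min (x^2) 1 ≤ 1 := min_le_right _ _
      nlinarith [sq_nonneg t, mul_le_mul_of_nonneg_right hm2 (sq_nonneg t)]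
    rw [Real.norm_eq_abs, abs_div, abs_of_pos h1, div_eq_mul_inv]
    calc |Real.cos (c*t)| * (x^2+t^2)⁻¹ ≤ 1 * (x^2+t^2)⁻¹ :=
          mul_le_mul_of_nonneg_right (Real.abs_cos_le_one _) (inv_nonneg.2 h1.le)
      _ ≤ (min (x^2) 1)⁻¹ * (1+t^2)⁻¹ := by rw [one_mul]; exact key


lemma key_integral {x : ℝ} (hx : 0 < x) {c : ℝ} (hc : 0 ≤ c) :
    ∫ t in Set.Ioi (0:ℝ), Real.cos (c*t)/(x^2+t^2) = π/(2*x) * Real.exp (-(c*x)) := by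
  have hπ := Real.pi_pos
  have hGcont : Continuous (fun ξ : ℝ => 2*x/(x^2+(2*π*ξ)^2)) := by
    apply Continuous.div continuous_const (by continuity)
    intro ξ; positivity
  have hcont : Continuous (fun t : ℝ => (Real.exp (-x * |t|) : ℂ)) := by
    apply Complex.continuous_ofReal.comp
    exact Real.continuous_exp.comp (continuous_const.mul continuous_abs)
  have hFf : 𝓕 (fun t : ℝ => (Real.exp (-x * |t|) : ℂ))
      = fun ξ : ℝ => ((2*x/(x^2+(2*π*ξ)^2) : ℝ) : ℂ) := funext (fourier_exp_abs hx)
  have hFint : Integrable (𝓕 (fun t : ℝ => (Real.exp (-x * |t|) : ℂ))) := by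
    rw [hFf]; exact (G_integrable hx).ofReal
  have hinv := hcont.fourierInv_fourier_eq (exp_abs_integrableC hx) hFint
  have hc' := congrFun hinv c
  rw [hFf] at hc'
  rw [Real.fourierInv_eq'] at hc'
  simp only [RCLike.inner_apply, conj_trivial] at hc'
  have hintC : Integrable (fun ξ : ℝ =>
      Complex.exp (↑(2 * π * (ξ * c)) * Complex.I) • ((2*x/(x^2+(2*π*ξ)^2) : ℝ) : ℂ)) := by
    apply Integrable.mono' (G_integrable hx).norm
    · apply Continuous.aestronglyMeasurable
      exact (Complex.continuous_exp.comp
        ((Complex.continuous_ofReal.comp (by continuity)).mul continuous_const)).smul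
        (Complex.continuous_ofReal.comp hGcont)
    · filter_upwards with ξ
      have h1 : ‖Complex.exp (↑(2 * π * (ξ * c)) * Complex.I)‖ = 1 := by
        rw [Complex.norm_exp]
        simp
      rw [norm_smul, h1, one_mul, Complex.norm_real, Real.norm_eq_abs]
  have hre : Real.exp (-x * |c|)
      = ∫ ξ : ℝ, Real.cos (2 * π * (ξ * c)) * (2*x/(x^2+(2*π*ξ)^2)) := by
    have h0 := integral_re hintC
    simp only [mul_comm c] at hc'
    rw [hc'] at h0
    simp only [RCLike.re_to_complex, Complex.ofReal_re] at h0
    rw [← h0]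
    apply integral_congr_ae
    filter_upwards with ξ
    rw [smul_eq_mul, Complex.mul_re, Complex.exp_ofReal_mul_I_re, Complex.ofReal_re,
      Complex.ofReal_im, mul_zero, sub_zero]
  set h : ℝ → ℝ := fun s => Real.cos (s*c) * (2*x/(x^2+s^2)) with hh
  have hstep : ∫ ξ : ℝ, Real.cos (2 * π * (ξ * c)) * (2*x/(x^2+(2*π*ξ)^2))
      = ∫ ξ : ℝ, h (2*π*ξ) := by
    apply integral_congr_ae
    filter_upwards with ξ
    simp only [hh]
    ring_nf
  have hcv := MeasureTheory.Measure.integral_comp_mul_left h (2*π)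
  have h2π : |(2*π)⁻¹| = (2*π)⁻¹ := _root_.abs_of_pos (by positivity)
  rw [hcv, h2π, smul_eq_mul] at hstep
  have hhs : ∫ s : ℝ, h s = 2*x * ∫ s : ℝ, Real.cos (c*s)/(x^2+s^2) := by
    rw [← integral_const_mul]
    apply integral_congr_ae
    filter_upwards with s
    simp only [hh]
    rw [mul_comm s c]
    ring
  have hfull : ∫ s : ℝ, Real.cos (c*s)/(x^2+s^2) = π/x * Real.exp (-x*c) := by
    have h1 : Real.exp (-x * |c|)
        = (2*π)⁻¹ * (2*x * ∫ s : ℝ, Real.cos (c*s)/(x^2+s^2)) := by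
      rw [← hhs, ← hstep, hre]
    rw [_root_.abs_of_nonneg hc] at h1
    field_simp at h1 ⊢
    linarith
  have habs : ∫ s : ℝ, Real.cos (c*s)/(x^2+s^2)
      = 2 * ∫ t in Set.Ioi (0:ℝ), Real.cos (c*t)/(x^2+t^2) := by
    rw [← integral_comp_abs (f := fun s => Real.cos (c*s)/(x^2+s^2))]
    apply integral_congr_ae
    filter_upwards with s
    rw [_root_.sq_abs s, ← Real.cos_abs (c*s), ← Real.cos_abs (c*|s|), _root_.abs_mul c s, _root_.abs_mul c |s|, _root_.abs_abs]
  rw [habs] at hfull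
  rw [show -(c*x) = -x*c by ring]
  field_simp at hfull ⊢
  linarith
end CosCosAux

theorem cos_cos_integral (a b x : ℝ) (hx : 0 < x) (ha : 0 < a) (hab : a ≤ b) :
    ∫ t in Set.Ioi (0:ℝ), Real.cos (b * t) * Real.cos (a * t) / (x ^ 2 + t ^ 2)
      = (Real.pi / (2 * x)) * Real.exp (-b * x) * Real.cosh (a * x) := by
  have h1 : IntegrableOn (fun t : ℝ => (1/2) * (Real.cos ((b+a)*t)/(x^2+t^2))) (Set.Ioi 0) :=
    ((integrable_kernel hx (b+a)).const_mul _).integrableOn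
  have h2 : IntegrableOn (fun t : ℝ => (1/2) * (Real.cos ((b-a)*t)/(x^2+t^2))) (Set.Ioi 0) :=
    ((integrable_kernel hx (b-a)).const_mul _).integrableOn
  have hsplit : ∫ t in Set.Ioi (0:ℝ), Real.cos (b * t) * Real.cos (a * t) / (x ^ 2 + t ^ 2)
      = ∫ t in Set.Ioi (0:ℝ), ((1/2) * (Real.cos ((b+a)*t)/(x^2+t^2))
        + (1/2) * (Real.cos ((b-a)*t)/(x^2+t^2))) := by
    apply setIntegral_congr_fun measurableSet_Ioi
    intro t _
    have hca : Real.cos ((b+a)*t) = Real.cos (b*t) * Real.cos (a*t)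
        - Real.sin (b*t) * Real.sin (a*t) := by
      rw [show (b+a)*t = b*t + a*t by ring, Real.cos_add]
    have hcb : Real.cos ((b-a)*t) = Real.cos (b*t) * Real.cos (a*t)
        + Real.sin (b*t) * Real.sin (a*t) := by
      rw [show (b-a)*t = b*t - a*t by ring, Real.cos_sub]
    simp only
    rw [hca, hcb]
    ring
  rw [hsplit, integral_add h1 h2, integral_const_mul, integral_const_mul,
    key_integral hx (by linarith : (0:ℝ) ≤ b+a), key_integral hx (by linarith : (0:ℝ) ≤ b-a)]
  rw [Real.cosh_eq, show -((b+a)*x) = -b*x + -(a*x) by ring, show -((b-a)*x) = -b*x + a*x by ring,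
    Real.exp_add, Real.exp_add]
  ring
end
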